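/- For every positive integer n, ∑_{k=1}^n C(n,k)·C(n+k,k−1)·C_{k−1}/(−4)^{k−1} = (⌊(n+1)/2⌋/4^{n−1})·C(n,⌊n/2⌋)². -/

import Mathlib

open Finset

noncomputable def fc (n j : ℕ) : ℚ :=
  (n.choose (j+1) : ℚ) * ((n + j + 1).choose j : ℚ) * (catalan j : ℚ) / (-4 : ℚ) ^ j

noncomputable def gc (n j : ℕ) : ℚ :=
  (-2 * ((n:ℚ)*2+3) * ((n:ℚ)+3) * ((j:ℚ)+1)^2 * (j:ℚ)) /
    (((n:ℚ)+2) * ((n:ℚ)+(j:ℚ)+2) * ((n:ℚ)+(j:ℚ)+3)) * fc (n+2) j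

lemma r1 (n j : ℕ) : fc (n+1) j * (((n:ℚ)+2) * ((n:ℚ)+(j:ℚ)+3)) =
    fc (n+2) j * ((n+1-j : ℕ) : ℚ) * ((n:ℚ)+3) := by
  have h1 : (n+1).choose (j+1) * (n+2) = (n+2).choose (j+1) * (n+1-j) := by
    have h := Nat.choose_mul_succ_eq (n+1) (j+1)
    rwa [show n+1+1-(j+1) = n+1-j from by omega] at h
  have h2 : (n+1+j+1).choose j * (n+j+3) = (n+2+j+1).choose j * (n+3) := by
    have h := Nat.choose_mul_succ_eq (n+j+2) j
    rw [show n+j+2+1-j = n+3 from by omega] at h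
    rw [show n+1+j+1 = n+j+2 from by omega, show n+2+j+1 = n+j+2+1 from by omega]
    exact h
  have h1' : ((n+1).choose (j+1) : ℚ) * ((n:ℚ)+2) = ((n+2).choose (j+1) : ℚ) * ((n+1-j : ℕ):ℚ) := by
    exact_mod_cast h1
  have h2' : ((n+1+j+1).choose j : ℚ) * ((n:ℚ)+(j:ℚ)+3) = ((n+2+j+1).choose j : ℚ) * ((n:ℚ)+3) := by
    exact_mod_cast h2
  simp only [fc]
  linear_combination ((catalan j : ℚ)/(-4:ℚ)^j * (((n+1+j+1).choose j : ℚ) * ((n:ℚ)+(j:ℚ)+3))) * h1'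
    + ((catalan j : ℚ)/(-4:ℚ)^j * (((n+2).choose (j+1) : ℚ) * ((n+1-j : ℕ):ℚ))) * h2'

lemma r2 (n j : ℕ) : fc n j * (((n:ℚ)+1) * ((n:ℚ)+(j:ℚ)+2)) =
    fc (n+1) j * ((n-j : ℕ) : ℚ) * ((n:ℚ)+2) := by
  have h1 : n.choose (j+1) * (n+1) = (n+1).choose (j+1) * (n-j) := by
    have h := Nat.choose_mul_succ_eq n (j+1)
    rwa [show n+1-(j+1) = n-j from by omega] at h
  have h2 : (n+j+1).choose j * (n+j+2) = (n+1+j+1).choose j * (n+2) := by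
    have h := Nat.choose_mul_succ_eq (n+j+1) j
    rw [show n+j+1+1-j = n+2 from by omega] at h
    rw [show n+1+j+1 = n+j+1+1 from by omega]
    exact h
  have h1' : (n.choose (j+1) : ℚ) * ((n:ℚ)+1) = ((n+1).choose (j+1) : ℚ) * ((n-j : ℕ):ℚ) := by
    exact_mod_cast h1
  have h2' : ((n+j+1).choose j : ℚ) * ((n:ℚ)+(j:ℚ)+2) = ((n+1+j+1).choose j : ℚ) * ((n:ℚ)+2) := by
    exact_mod_cast h2
  simp only [fc]
  linear_combination ((catalan j : ℚ)/(-4:ℚ)^j * (((n+j+1).choose j : ℚ) * ((n:ℚ)+(j:ℚ)+2))) * h1'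
    + ((catalan j : ℚ)/(-4:ℚ)^j * (((n+1).choose (j+1) : ℚ) * ((n-j : ℕ):ℚ))) * h2'

lemma r3 (n j : ℕ) : fc (n+2) (j+1) * ((-4:ℚ) * ((j:ℚ)+1) * ((j:ℚ)+2)^2) =
    fc (n+2) j * ((n+1-j : ℕ) : ℚ) * ((n:ℚ)+(j:ℚ)+4) * (2*(2*(j:ℚ)+1)) := by
  have h1 : (n+2).choose (j+2) * (j+2) = (n+2).choose (j+1) * (n+1-j) := by
    have h := Nat.choose_succ_right_eq (n+2) (j+1)
    rwa [show n+2-(j+1) = n+1-j from by omega] at h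
  have h2 : (n+j+4).choose (j+1) * (j+1) = (n+j+3).choose j * (n+j+4) := by
    have h := Nat.add_one_mul_choose_eq (n+j+3) j
    calc (n+j+4).choose (j+1) * (j+1) = (n+j+3+1).choose (j+1) * (j+1) := by norm_num
      _ = (n+j+3+1) * (n+j+3).choose j := h.symm
      _ = (n+j+3).choose j * (n+j+4) := by ring
  have h3 : catalan (j+1) * (j+2) = 2*(2*j+1) * catalan j := by
    have a := succ_mul_catalan_eq_centralBinom (j+1)
    have b := Nat.succ_mul_centralBinom_succ j
    have c := succ_mul_catalan_eq_centralBinom j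
    have : (j+1) * (catalan (j+1) * (j+2)) = (j+1) * (2*(2*j+1) * catalan j) := by
      calc (j+1) * (catalan (j+1) * (j+2)) = (j+1) * ((j+1+1) * catalan (j+1)) := by ring
        _ = (j+1) * Nat.centralBinom (j+1) := by rw [a]
        _ = 2*(2*j+1) * Nat.centralBinom j := b
        _ = 2*(2*j+1) * ((j+1) * catalan j) := by rw [← c]
        _ = (j+1) * (2*(2*j+1) * catalan j) := by ring
    exact Nat.eq_of_mul_eq_mul_left (by omega) this
  have h1' : ((n+2).choose (j+2) : ℚ) * ((j:ℚ)+2) = ((n+2).choose (j+1) : ℚ) * ((n+1-j : ℕ):ℚ) := by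
    exact_mod_cast h1
  have h2' : ((n+j+4).choose (j+1) : ℚ) * ((j:ℚ)+1) = ((n+j+3).choose j : ℚ) * ((n:ℚ)+(j:ℚ)+4) := by
    exact_mod_cast h2
  have h3' : (catalan (j+1) : ℚ) * ((j:ℚ)+2) = 2*(2*(j:ℚ)+1) * (catalan j : ℚ) := by
    exact_mod_cast h3
  have hp : ((-4:ℚ)) ^ (j+1) = (-4) * (-4)^j := by rw [pow_succ]; ring
  simp only [fc, show n+2+(j+1)+1 = n+j+4 from by omega, show n+2+j+1 = n+j+3 from by omega,
    show j+1+1 = j+2 from rfl, hp]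
  have hd : ((-4:ℚ))^j ≠ 0 := pow_ne_zero _ (by norm_num)
  linear_combination
    ((((n+j+4).choose (j+1) : ℚ) * ((j:ℚ)+1) * (catalan (j+1) : ℚ) * ((j:ℚ)+2))/(-4:ℚ)^j) * h1'
    + ((((n+2).choose (j+1) : ℚ) * ((n+1-j : ℕ):ℚ) * (catalan (j+1) : ℚ) * ((j:ℚ)+2))/(-4:ℚ)^j) * h2'
    + ((((n+2).choose (j+1) : ℚ) * ((n+1-j : ℕ):ℚ) * (((n+j+3).choose j : ℚ)) * ((n:ℚ)+(j:ℚ)+4))/(-4:ℚ)^j) * h3'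

lemma fczero (m j : ℕ) (h : m ≤ j) : fc m j = 0 := by
  simp [fc, Nat.choose_eq_zero_of_lt (by omega : m < j+1)]

lemma keylem (n j : ℕ) (hj : j ≤ n+1) :
    ((n:ℚ)+1)*((n:ℚ)+3) * fc (n+2) j - (2*(n:ℚ)+3) * fc (n+1) j - ((n:ℚ)+1)^2 * fc n j
      = gc n (j+1) - gc n j := by
  have e1 := r1 n j
  have e2 := r2 n j
  have e3 := r3 n j
  have hn2 : ((n:ℚ)+2) ≠ 0 := by positivity
  have hn1 : ((n:ℚ)+1) ≠ 0 := by positivity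
  have hnj2 : ((n:ℚ)+(j:ℚ)+2) ≠ 0 := by positivity
  have hnj3 : ((n:ℚ)+(j:ℚ)+3) ≠ 0 := by positivity
  have hnj4 : ((n:ℚ)+(j:ℚ)+4) ≠ 0 := by positivity
  have hj1 : ((j:ℚ)+1) ≠ 0 := by positivity
  have hj2 : ((j:ℚ)+2) ≠ 0 := by positivity
  have f1 : fc (n+1) j = fc (n+2) j * ((n+1-j : ℕ) : ℚ) * ((n:ℚ)+3) / (((n:ℚ)+2) * ((n:ℚ)+(j:ℚ)+3)) := by
    rw [eq_div_iff (by positivity)]; exact e1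
  have f2 : fc n j = fc (n+1) j * ((n-j : ℕ) : ℚ) * ((n:ℚ)+2) / (((n:ℚ)+1) * ((n:ℚ)+(j:ℚ)+2)) := by
    rw [eq_div_iff (by positivity)]; exact e2
  have f3 : fc (n+2) (j+1) = fc (n+2) j * ((n+1-j : ℕ) : ℚ) * ((n:ℚ)+(j:ℚ)+4) * (2*(2*(j:ℚ)+1))
      / ((-4:ℚ) * ((j:ℚ)+1) * ((j:ℚ)+2)^2) := by
    rw [eq_div_iff (by intro h; apply hj1; nlinarith [sq_nonneg ((j:ℚ)+2)])]
    exact e3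
  rcases Nat.lt_or_ge j (n+1) with hlt | hge
  · -- j ≤ n
    have ht : ((n+1-j : ℕ) : ℚ) = (n:ℚ) + 1 - j := by
      rw [Nat.cast_sub (show j ≤ n+1 by omega)]; push_cast; ring
    have hs : ((n-j : ℕ) : ℚ) = (n:ℚ) - j := by
      rw [Nat.cast_sub (show j ≤ n by omega)]
    simp only [gc, f3, f2, f1, ht, hs]
    push_cast
    field_simp
    ring
  · -- j = n+1
    have hjn : j = n+1 := by omega
    subst hjn
    have ht : ((n+1-(n+1) : ℕ) : ℚ) = 0 := by simp
    have hs : ((n-(n+1) : ℕ) : ℚ) = 0 := by simp [Nat.sub_eq_zero_of_le (Nat.le_succ n)]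
    simp only [gc, f3, f2, f1, ht, hs]
    push_cast
    field_simp
    ring

noncomputable def Sc (n : ℕ) : ℚ := ∑ j ∈ range n, fc n j

lemma Srec (n : ℕ) :
    ((n:ℚ)+1)*((n:ℚ)+3) * Sc (n+2) = (2*(n:ℚ)+3) * Sc (n+1) + ((n:ℚ)+1)^2 * Sc n := by
  have hS1 : Sc (n+1) = ∑ j ∈ range (n+2), fc (n+1) j := by
    rw [Sc, Finset.sum_range_succ (fc (n+1)) (n+1), fczero (n+1) (n+1) le_rfl, add_zero]
  have hS0 : Sc n = ∑ j ∈ range (n+2), fc n j := by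
    rw [Sc, Finset.sum_range_succ (fc n) (n+1), Finset.sum_range_succ (fc n) n,
      fczero n (n+1) (by omega), fczero n n le_rfl, add_zero, add_zero]
  have tele : ∑ j ∈ range (n+2), (gc n (j+1) - gc n j) = gc n (n+2) - gc n 0 :=
    Finset.sum_range_sub (gc n) (n+2)
  have h0 : gc n 0 = 0 := by simp [gc]
  have hend : gc n (n+2) = 0 := by
    rw [gc, fczero (n+2) (n+2) le_rfl, mul_zero]
  have key : ∑ j ∈ range (n+2),
      (((n:ℚ)+1)*((n:ℚ)+3) * fc (n+2) j - (2*(n:ℚ)+3) * fc (n+1) j - ((n:ℚ)+1)^2 * fc n j)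
      = 0 := by
    rw [Finset.sum_congr rfl (fun j hj => keylem n j (by simp at hj; omega)), tele, h0, hend]
    ring
  rw [hS1, hS0, Sc]
  have expand := Finset.sum_sub_distrib (s := range (n+2))
    (f := fun j => ((n:ℚ)+1)*((n:ℚ)+3) * fc (n+2) j - (2*(n:ℚ)+3) * fc (n+1) j)
    (g := fun j => ((n:ℚ)+1)^2 * fc n j)
  rw [expand, Finset.sum_sub_distrib, ← Finset.mul_sum, ← Finset.mul_sum, ← Finset.mul_sum] at key
  linarith [key]

noncomputable def Rq (n : ℕ) : ℚ :=
  (((n + 1) / 2 : ℕ) : ℚ) / (4 : ℚ) ^ (n - 1) * ((n.choose (n / 2) : ℚ))^2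

lemma Rq_odd (m : ℕ) : Rq (2*m+1) = ((m:ℚ)+1) / (4:ℚ)^(2*m) * (((2*m+1).choose m : ℚ))^2 := by
  rw [Rq, show (2*m+1+1)/2 = m+1 from by omega, show (2*m+1)/2 = m from by omega,
    show 2*m+1-1 = 2*m from by omega]
  push_cast; ring

lemma Rq_even (m : ℕ) : Rq (2*m+2) = ((m:ℚ)+1) / (4:ℚ)^(2*m+1) * (((2*m+2).choose (m+1) : ℚ))^2 := by
  rw [Rq, show (2*m+2+1)/2 = m+1 from by omega, show (2*m+2)/2 = m+1 from by omega,
    show 2*m+2-1 = 2*m+1 from by omega]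
  push_cast; ring

lemma Rrec (n : ℕ) (hn : 1 ≤ n) :
    ((n:ℚ)+1)*((n:ℚ)+3) * Rq (n+2) = (2*(n:ℚ)+3) * Rq (n+1) + ((n:ℚ)+1)^2 * Rq n := by
  have h4 : ((4:ℚ))^(2*1) ≠ 0 := by norm_num
  rcases Nat.even_or_odd n with ⟨m, hm⟩ | ⟨m, hm⟩
  · -- n = 2m+2 with m+1 = n/2 ... n even, n ≥ 1 so n = 2*(m'-?) ; n = m + m, n ≥ 2
    have hm1 : 1 ≤ m := by omega
    obtain ⟨p, hp⟩ : ∃ p, m = p + 1 := ⟨m - 1, by omega⟩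
    have hn' : n = 2*p+2 := by omega
    subst hn'
    rw [show 2*p+2+2 = 2*(p+1)+2 from by ring, show 2*p+2+1 = 2*(p+1)+1 from by ring,
      Rq_even (p+1), Rq_odd (p+1), Rq_even p]
    have hb := Nat.choose_mul_succ_eq (2*p+2) (p+1)
    rw [show 2*p+2+1-(p+1) = p+2 from by omega] at hb
    have hd := Nat.add_one_mul_choose_eq (2*p+3) (p+1)
    have hb' : ((2*p+2).choose (p+1) : ℚ) * (2*(p:ℚ)+3) = ((2*p+3).choose (p+1) : ℚ) * ((p:ℚ)+2) := by
      rw [show (2*p+3 : ℕ) = 2*p+2+1 from by omega]; exact_mod_cast hb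
    have hd' : (2*(p:ℚ)+4) * ((2*p+3).choose (p+1) : ℚ) = ((2*p+4).choose (p+2) : ℚ) * ((p:ℚ)+2) := by
      rw [show (2*p+4 : ℕ) = 2*p+3+1 from by omega, show (p+2 : ℕ) = p+1+1 from rfl]
      exact_mod_cast hd
    rw [show 2*(p+1)+1 = 2*p+3 from by omega, show 2*(p+1)+2 = 2*p+4 from by omega,
      show (p+1)+1 = p+2 from rfl]
    have hp1 : ((4:ℚ))^(2*(p+1)) = (4:ℚ)^(2*p+1) * 4 := by
      rw [show 2*(p+1) = (2*p+1)+1 from by omega, pow_succ]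
    have hp2 : ((4:ℚ))^(2*p+3) = (4:ℚ)^(2*p+1) * 16 := by
      rw [show 2*p+3 = (2*p+1)+2 from by omega, pow_add]; norm_num
    rw [hp1, hp2]
    have hpow : ((4:ℚ))^(2*p+1) ≠ 0 := by positivity
    have hd2 : ((2*p+4).choose (p+2) : ℚ)
        = (2*(p:ℚ)+4) * ((2*p+3).choose (p+1) : ℚ) / ((p:ℚ)+2) := by
      rw [eq_div_iff (by positivity)]; linear_combination -hd'
    have hb2 : ((2*p+3).choose (p+1) : ℚ)
        = ((2*p+2).choose (p+1) : ℚ) * (2*(p:ℚ)+3) / ((p:ℚ)+2) := by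
      rw [eq_div_iff (by positivity)]; linear_combination -hb'
    rw [hd2, hb2]
    push_cast
    field_simp
    ring
  · -- n = 2m+1
    subst hm
    rw [show 2*m+1+2 = 2*(m+1)+1 from by ring, show 2*m+1+1 = 2*m+2 from by ring,
      Rq_odd (m+1), Rq_even m, Rq_odd m]
    have hc := Nat.add_one_mul_choose_eq (2*m+1) m
    have hb := Nat.choose_mul_succ_eq (2*m+2) (m+1)
    rw [show 2*m+2+1-(m+1) = m+2 from by omega] at hb
    have hc' : (2*(m:ℚ)+2) * ((2*m+1).choose m : ℚ) = ((2*m+2).choose (m+1) : ℚ) * ((m:ℚ)+1) := by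
      rw [show (2*m+2 : ℕ) = 2*m+1+1 from by omega]; exact_mod_cast hc
    have hb' : ((2*m+2).choose (m+1) : ℚ) * (2*(m:ℚ)+3) = ((2*m+3).choose (m+1) : ℚ) * ((m:ℚ)+2) := by
      rw [show (2*m+3 : ℕ) = 2*m+2+1 from by omega]; exact_mod_cast hb
    rw [show 2*(m+1)+1 = 2*m+3 from by omega, show 2*(m+1) = 2*m+2 from by omega]
    have hp1 : ((4:ℚ))^(2*m+2) = (4:ℚ)^(2*m) * 16 := by rw [pow_add]; norm_num
    have hp2 : ((4:ℚ))^(2*m+1) = (4:ℚ)^(2*m) * 4 := by rw [pow_succ]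
    rw [hp1, hp2]
    have hpow : ((4:ℚ))^(2*m) ≠ 0 := by positivity
    have hb2 : ((2*m+3).choose (m+1) : ℚ)
        = ((2*m+2).choose (m+1) : ℚ) * (2*(m:ℚ)+3) / ((m:ℚ)+2) := by
      rw [eq_div_iff (by positivity)]; linear_combination -hb'
    have hc2 : ((2*m+2).choose (m+1) : ℚ)
        = (2*(m:ℚ)+2) * ((2*m+1).choose m : ℚ) / ((m:ℚ)+1) := by
      rw [eq_div_iff (by positivity)]; linear_combination -hc'
    rw [hb2, hc2]
    push_cast
    field_simp
    ring

lemma base1 : Sc 1 = Rq 1 := by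
  rw [Sc, Rq]
  norm_num [fc, Finset.sum_range_one]

lemma base2 : Sc 2 = Rq 2 := by
  rw [Sc, Rq]
  rw [Finset.sum_range_succ, Finset.sum_range_one]
  norm_num [fc, catalan_one]

lemma mainlem : ∀ n : ℕ, Sc (n+1) = Rq (n+1) ∧ Sc (n+2) = Rq (n+2) := by
  intro n
  induction n with
  | zero => exact ⟨base1, base2⟩
  | succ m ih =>
    refine ⟨ih.2, ?_⟩
    have h1 := Srec (m+1)
    have h2 := Rrec (m+1) (by omega)
    have hz : ((m:ℚ)+2)*((m:ℚ)+4) * (Sc (m+3) - Rq (m+3)) = 0 := by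
      push_cast at h1 h2
      have e1 := ih.1
      have e2 := ih.2
      push_cast at e1 e2
      ring_nf
      ring_nf at h1 h2 e1 e2
      nlinarith [h1, h2, e1, e2]
    have hnz : ((m:ℚ)+2)*((m:ℚ)+4) ≠ 0 := by positivity
    have := mul_eq_zero.mp hz
    rcases this with h | h
    · exact absurd h hnz
    · linarith [sub_eq_zero.mp h]

theorem catalan_binom_identity (n : ℕ) (hn : 1 ≤ n) :
    ∑ k ∈ Icc 1 n, (n.choose k : ℚ) * ((n + k).choose (k - 1) : ℚ) *
        (catalan (k - 1) : ℚ) / (-4 : ℚ) ^ (k - 1) =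
    (((n + 1) / 2 : ℕ) : ℚ) / (4 : ℚ) ^ (n - 1) * ((n.choose (n / 2) : ℚ))^2 := by
  have hL : ∑ k ∈ Icc 1 n, (n.choose k : ℚ) * ((n + k).choose (k - 1) : ℚ) *
      (catalan (k - 1) : ℚ) / (-4 : ℚ) ^ (k - 1) = Sc n := by
    rw [← Finset.Ico_add_one_right_eq_Icc, Finset.sum_Ico_eq_sum_range]
    rw [show n + 1 - 1 = n from by omega, Sc]
    refine Finset.sum_congr rfl fun j _ => ?_
    rw [fc, show 1 + j - 1 = j from by omega, show n + (1 + j) = n + j + 1 from by omega,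
      show 1 + j = j + 1 from by omega]
  rw [hL]
  obtain ⟨m, hm⟩ : ∃ m, n = m + 1 := ⟨n - 1, by omega⟩
  subst hm
  exact (mainlem m).1
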